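/- Existence of a canonical routing/coding decomposition (Theorem 2): Let X_in, X_out be information flow vectors with nonnegative entries satisfying the flow constraint I_k(X_in) = I_k(X_out) for every k ∈ D. For each nonempty P ⊆ D with |P| ≥ 2, let Q(P) be the collection of singleton subsets of P, and set r_{Q(P)} = x_in(P), n_{Q(P)} = x_out(P), with all other routing and coding variables 0. Then the node constraints hold: for every nonempty P ⊆ D, x_out(P) = x_in(P) + Σ_{j : P ∈ Q_j}(r_j − n_j) − Σ_{j : ∪Q_j = P}(r_j − n_j), and all r_j, n_j ≥ 0. -/

import Mathlib

open Finset

/-- `I k X` : total flow to receiver `k`. -/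
noncomputable def I {α : Type*} [Fintype α] [DecidableEq α] (k : α)
    (X : Finset α → ℝ) : ℝ :=
  ∑ P ∈ univ.filter (fun P : Finset α => k ∈ P), X P

/-- A valid collection: two or more pairwise disjoint nonempty subsets of `D`. -/
def ValidQ {α : Type*} [DecidableEq α] (Q : Finset (Finset α)) : Prop :=
  2 ≤ Q.card ∧ (∀ P ∈ Q, P.Nonempty) ∧
    ∀ P ∈ Q, ∀ P' ∈ Q, P ≠ P' → Disjoint P P'

instance {α : Type*} [DecidableEq α] : DecidablePred (ValidQ (α := α)) := by
  unfold ValidQ; infer_instance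

/-- The (finite) set 𝒬 of all valid collections. -/
noncomputable def QSet (α : Type*) [Fintype α] [DecidableEq α] :
    Finset (Finset (Finset α)) :=
  univ.filter ValidQ

/-- The collection of singleton subsets of `P`. -/
def singletonsOf {α : Type*} [DecidableEq α] (P : Finset α) : Finset (Finset α) :=
  P.image (fun k => {k})

lemma sup_singletonsOf {α : Type*} [DecidableEq α] (P : Finset α) :
    (singletonsOf P).sup id = P := by
  ext x
  simp [singletonsOf, Finset.mem_sup]

lemma singletonsOf_mem_QSet {α : Type*} [Fintype α] [DecidableEq α]
    {P : Finset α} (hP : 2 ≤ P.card) : singletonsOf P ∈ QSet α := by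
  simp only [QSet, mem_filter, mem_univ, true_and]
  refine ⟨?_, ?_, ?_⟩
  · rwa [singletonsOf, Finset.card_image_of_injective _ (fun a b h => by simpa using h)]
  · intro Q hQ
    simp only [singletonsOf, mem_image] at hQ
    obtain ⟨k, _, rfl⟩ := hQ
    exact singleton_nonempty k
  · intro Q hQ Q' hQ' hne
    simp only [singletonsOf, mem_image] at hQ hQ'
    obtain ⟨k, _, rfl⟩ := hQ
    obtain ⟨k', _, rfl⟩ := hQ'
    rw [Finset.disjoint_singleton]
    exact fun h => hne (by rw [h])

lemma mem_singletonsOf {α : Type*} [DecidableEq α] {P S : Finset α} :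
    S ∈ singletonsOf P ↔ ∃ k ∈ P, S = {k} := by
  simp [singletonsOf, eq_comm]

lemma sum_decomp {α : Type*} [Fintype α] [DecidableEq α]
    (f : Finset α → ℝ)
    (c : Finset (Finset α) → Prop) [DecidablePred c] :
    ∑ Q ∈ (QSet α).filter c,
        (∑ P ∈ univ.filter (fun P : Finset α => 2 ≤ P.card ∧ singletonsOf P = Q), f P)
      = ∑ P ∈ univ.filter (fun P : Finset α => 2 ≤ P.card ∧ c (singletonsOf P)), f P := by
  have h1 : ∀ Q ∈ (QSet α).filter c,
      (univ.filter (fun P : Finset α => 2 ≤ P.card ∧ singletonsOf P = Q))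
      = (univ.filter (fun P : Finset α => 2 ≤ P.card ∧ c (singletonsOf P))).filter
          (fun P => singletonsOf P = Q) := by
    intro Q hQ
    rw [mem_filter] at hQ
    ext P
    simp only [mem_filter, mem_univ, true_and]
    constructor
    · rintro ⟨h2, rfl⟩
      exact ⟨⟨h2, hQ.2⟩, rfl⟩
    · rintro ⟨⟨h2, _⟩, rfl⟩
      exact ⟨h2, rfl⟩
  rw [Finset.sum_congr rfl (fun Q hQ => by rw [h1 Q hQ])]
  exact Finset.sum_fiberwise_of_maps_to (fun P hP => by
    rw [mem_filter] at hP ⊢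
    exact ⟨singletonsOf_mem_QSet hP.2.1, hP.2.2⟩) f

/-- Theorem 2 (canonical decomposition): setting `r_{Q(P)} = x_in(P)`,
`n_{Q(P)} = x_out(P)` for `|P| ≥ 2` and all other variables to zero yields
nonnegative variables satisfying the node constraints. -/
theorem canonical_decomposition {α : Type*} [Fintype α] [DecidableEq α]
    (hcard : 2 ≤ Fintype.card α)
    (Xin Xout : Finset α → ℝ)
    (hin : ∀ P : Finset α, 0 ≤ Xin P) (hout : ∀ P : Finset α, 0 ≤ Xout P)
    (hflow : ∀ k : α, I k Xin = I k Xout)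
    (r n : Finset (Finset α) → ℝ)
    (hr : ∀ Q : Finset (Finset α),
      r Q = ∑ P ∈ univ.filter (fun P : Finset α => 2 ≤ P.card ∧ singletonsOf P = Q), Xin P)
    (hn : ∀ Q : Finset (Finset α),
      n Q = ∑ P ∈ univ.filter (fun P : Finset α => 2 ≤ P.card ∧ singletonsOf P = Q), Xout P) :
    (∀ P : Finset α, P.Nonempty →
      Xout P = Xin P + (∑ Q ∈ (QSet α).filter (fun Q => P ∈ Q), (r Q - n Q))
        - ∑ Q ∈ (QSet α).filter (fun Q => Q.sup id = P), (r Q - n Q)) ∧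
    (∀ Q, 0 ≤ r Q) ∧ (∀ Q, 0 ≤ n Q) := by
  have hsum : ∀ (c : Finset (Finset α) → Prop) (_ : DecidablePred c),
      ∑ Q ∈ (QSet α).filter c, (r Q - n Q)
      = ∑ P ∈ univ.filter (fun P : Finset α => 2 ≤ P.card ∧ c (singletonsOf P)),
          (Xin P - Xout P) := by
    intro c hc
    simp only [hr, hn, ← Finset.sum_sub_distrib]
    exact sum_decomp _ c
  refine ⟨?_, ?_, ?_⟩
  · intro P hP
    rw [hsum (fun Q => P ∈ Q) inferInstance, hsum (fun Q => Q.sup id = P) inferInstance]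
    rcases eq_or_lt_of_le (Finset.one_le_card.2 hP) with h1 | h2
    · -- P is a singleton
      obtain ⟨k, rfl⟩ := Finset.card_eq_one.1 h1.symm
      have hA : (univ.filter (fun P' : Finset α =>
          2 ≤ P'.card ∧ ({k} : Finset α) ∈ singletonsOf P'))
          = univ.filter (fun P' : Finset α => 2 ≤ P'.card ∧ k ∈ P') := by
        ext P'
        simp only [mem_filter, mem_univ, true_and, mem_singletonsOf]
        constructor
        · rintro ⟨h2, j, hj, hjk⟩
          have : j = k := by
            have := Finset.singleton_injective hjk.symm; exact this
          exact ⟨h2, this ▸ hj⟩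
        · rintro ⟨h2, hk⟩
          exact ⟨h2, k, hk, rfl⟩
      have hB : (univ.filter (fun P' : Finset α =>
          2 ≤ P'.card ∧ (singletonsOf P').sup id = {k})) = ∅ := by
        ext P'
        simp only [mem_filter, mem_univ, true_and, notMem_empty, iff_false, not_and]
        intro h2 heq
        rw [sup_singletonsOf] at heq
        subst heq
        simp at h2
      rw [hA, hB, Finset.sum_empty]
      -- use flow constraint
      have hsplit : (univ.filter (fun P' : Finset α => k ∈ P'))
          = insert {k} (univ.filter (fun P' : Finset α => 2 ≤ P'.card ∧ k ∈ P')) := by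
        ext P'
        simp only [mem_filter, mem_univ, true_and, mem_insert]
        constructor
        · intro hk
          rcases eq_or_ne P' {k} with rfl | hne
          · exact Or.inl rfl
          · refine Or.inr ⟨?_, hk⟩
            have hss : ({k} : Finset α) ⊂ P' :=
              (Finset.ssubset_iff_of_subset (Finset.singleton_subset_iff.2 hk)).2
                (by
                  by_contra hcon
                  push_neg at hcon
                  exact hne (Finset.eq_singleton_iff_unique_mem.2 ⟨hk,
                    fun x hx => by
                      by_contra hxk
                      exact hxk (by simpa using hcon x hx)⟩))
            have := Finset.card_lt_card hss
            exact (by simpa using this : 1 < P'.card)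
        · rintro (rfl | ⟨_, hk⟩)
          · simp
          · exact hk
      have hnotmem : ({k} : Finset α) ∉
          univ.filter (fun P' : Finset α => 2 ≤ P'.card ∧ k ∈ P') := by
        simp
      have hflowk := hflow k
      unfold I at hflowk
      have key : Xin {k} + ∑ P' ∈ univ.filter (fun P' : Finset α => 2 ≤ P'.card ∧ k ∈ P'),
          Xin P' = Xout {k} + ∑ P' ∈ univ.filter (fun P' : Finset α => 2 ≤ P'.card ∧ k ∈ P'),
          Xout P' := by
        rw [← Finset.sum_insert hnotmem, ← Finset.sum_insert hnotmem, ← hsplit]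
        exact hflowk
      rw [Finset.sum_sub_distrib]
      linarith
    · -- 2 ≤ P.card
      have h2 : 2 ≤ P.card := h2
      have hA : (univ.filter (fun P' : Finset α =>
          2 ≤ P'.card ∧ P ∈ singletonsOf P')) = ∅ := by
        ext P'
        simp only [mem_filter, mem_univ, true_and, notMem_empty, iff_false, not_and]
        intro _ hmem
        rw [mem_singletonsOf] at hmem
        obtain ⟨j, _, rfl⟩ := hmem
        simp at h2
      have hB : (univ.filter (fun P' : Finset α =>
          2 ≤ P'.card ∧ (singletonsOf P').sup id = P)) = {P} := by
        ext P'
        simp only [mem_filter, mem_univ, true_and, mem_singleton]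
        constructor
        · rintro ⟨_, heq⟩
          rw [sup_singletonsOf] at heq; exact heq
        · rintro rfl
          exact ⟨h2, sup_singletonsOf _⟩
      rw [hA, hB, Finset.sum_empty, Finset.sum_singleton]
      ring
  · intro Q
    rw [hr]
    exact Finset.sum_nonneg (fun P _ => hin P)
  · intro Q
    rw [hn]
    exact Finset.sum_nonneg (fun P _ => hout P)
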